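/- For every x = (x₁, x₂) ∈ ℝ² the identity div(Dξ ξ)(x) = 2·D_H(x) holds, where D_H(x) = h₁'(x₁)² h₂'(x₂)² − h₁(x₁)h₁''(x₁) h₂(x₂)h₂''(x₂); moreover D_H(x) = −det(Hess H(x)). -/

import Mathlib

noncomputable section

lemma sep_hasFDerivAt (g₁ g₂ : ℝ → ℝ) (x : ℝ × ℝ)
    (d₁ : DifferentiableAt ℝ g₁ x.1) (d₂ : DifferentiableAt ℝ g₂ x.2) :
    HasFDerivAt (fun y : ℝ × ℝ => g₁ y.1 * g₂ y.2)
      (g₁ x.1 • (deriv g₂ x.2 • ContinuousLinearMap.snd ℝ ℝ ℝ) +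
        g₂ x.2 • (deriv g₁ x.1 • ContinuousLinearMap.fst ℝ ℝ ℝ)) x := by
  have hc : HasFDerivAt (fun y : ℝ × ℝ => g₁ y.1)
      (deriv g₁ x.1 • ContinuousLinearMap.fst ℝ ℝ ℝ) x :=
    (d₁.hasDerivAt).comp_hasFDerivAt x (hasFDerivAt_fst)
  have hd : HasFDerivAt (fun y : ℝ × ℝ => g₂ y.2)
      (deriv g₂ x.2 • ContinuousLinearMap.snd ℝ ℝ ℝ) x :=
    (d₂.hasDerivAt).comp_hasFDerivAt x (hasFDerivAt_snd)
  exact hc.mul hd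

lemma sep2_fderiv_apply (g₁ k₁ g₂ k₂ : ℝ → ℝ) (x u : ℝ × ℝ)
    (dg₁ : DifferentiableAt ℝ g₁ x.1) (dk₁ : DifferentiableAt ℝ k₁ x.2)
    (dg₂ : DifferentiableAt ℝ g₂ x.1) (dk₂ : DifferentiableAt ℝ k₂ x.2) :
    fderiv ℝ (fun y : ℝ × ℝ => (g₁ y.1 * k₁ y.2, g₂ y.1 * k₂ y.2)) x u =
      (deriv g₁ x.1 * k₁ x.2 * u.1 + g₁ x.1 * deriv k₁ x.2 * u.2,
        deriv g₂ x.1 * k₂ x.2 * u.1 + g₂ x.1 * deriv k₂ x.2 * u.2) := by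
  rw [((sep_hasFDerivAt g₁ k₁ x dg₁ dk₁).prodMk (sep_hasFDerivAt g₂ k₂ x dg₂ dk₂)).fderiv]
  simp [ContinuousLinearMap.smul_apply]
  constructor <;> ring

lemma sep_fderiv_apply (g₁ g₂ : ℝ → ℝ) (x u : ℝ × ℝ)
    (d₁ : DifferentiableAt ℝ g₁ x.1) (d₂ : DifferentiableAt ℝ g₂ x.2) :
    fderiv ℝ (fun y : ℝ × ℝ => g₁ y.1 * g₂ y.2) x u =
      deriv g₁ x.1 * g₂ x.2 * u.1 + g₁ x.1 * deriv g₂ x.2 * u.2 := by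
  rw [(sep_hasFDerivAt g₁ g₂ x d₁ d₂).fderiv]
  simp [ContinuousLinearMap.smul_apply]
  ring

/-- The factorized Hamiltonian `H(x₁,x₂) = h₁(x₁)·h₂(x₂)`. -/
def Ham (h₁ h₂ : ℝ → ℝ) : ℝ × ℝ → ℝ := fun x => h₁ x.1 * h₂ x.2

/-- The Hamiltonian vector field `ξ = ∇⊥H = (−h₁h₂', h₁'h₂)`. -/
def xiField (h₁ h₂ : ℝ → ℝ) : ℝ × ℝ → ℝ × ℝ :=
  fun x => (-(h₁ x.1 * deriv h₂ x.2), deriv h₁ x.1 * h₂ x.2)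

/-- The divergence of a vector field on `ℝ²`. -/
def divR2 (V : ℝ × ℝ → ℝ × ℝ) (x : ℝ × ℝ) : ℝ :=
  (fderiv ℝ V x (1, 0)).1 + (fderiv ℝ V x (0, 1)).2

/-- The second derivative (Hessian bilinear form) of `f : ℝ × ℝ → ℝ` at `x`,
evaluated at the pair of directions `(u, v)`. -/
def Hess (f : ℝ × ℝ → ℝ) (x u v : ℝ × ℝ) : ℝ :=
  fderiv ℝ (fun y => fderiv ℝ f y u) x v

/-- The determinant of the Hessian of `f` at `x`. -/
def detHess (f : ℝ × ℝ → ℝ) (x : ℝ × ℝ) : ℝ :=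
  Hess f x (1, 0) (1, 0) * Hess f x (0, 1) (0, 1) -
    Hess f x (1, 0) (0, 1) * Hess f x (0, 1) (1, 0)

/-- The function `D_H = (h₁')²(h₂')² − h₁h₁''h₂h₂''`. -/
def DHFn (h₁ h₂ : ℝ → ℝ) : ℝ × ℝ → ℝ := fun x =>
  (deriv h₁ x.1) ^ 2 * (deriv h₂ x.2) ^ 2 -
    (h₁ x.1 * deriv (deriv h₁) x.1) * (h₂ x.2 * deriv (deriv h₂) x.2)

/-- The identity `div(Dξ ξ) = 2 D_H`, together with `D_H = −det Hess H`. -/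
theorem div_acceleration_eq_two_DH
    (h₁ h₂ : ℝ → ℝ)
    (hreg₁ : ContDiff ℝ 3 h₁) (hreg₂ : ContDiff ℝ 3 h₂) :
    ∀ x : ℝ × ℝ,
      divR2 (fun y => fderiv ℝ (xiField h₁ h₂) y (xiField h₁ h₂ y)) x =
        2 * DHFn h₁ h₂ x ∧
      DHFn h₁ h₂ x = -detHess (Ham h₁ h₂) x := by
  -- differentiability facts
  have c1 : ContDiff ℝ 2 (deriv h₁) := by
    have : ContDiff ℝ (2 + 1) h₁ := by norm_num; exact hreg₁
    exact (contDiff_succ_iff_deriv.mp this).2.2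
  have c1' : ContDiff ℝ 1 (deriv (deriv h₁)) := by
    have : ContDiff ℝ (1 + 1) (deriv h₁) := by norm_num; exact c1
    exact (contDiff_succ_iff_deriv.mp this).2.2
  have c2 : ContDiff ℝ 2 (deriv h₂) := by
    have : ContDiff ℝ (2 + 1) h₂ := by norm_num; exact hreg₂
    exact (contDiff_succ_iff_deriv.mp this).2.2
  have c2' : ContDiff ℝ 1 (deriv (deriv h₂)) := by
    have : ContDiff ℝ (1 + 1) (deriv h₂) := by norm_num; exact c2
    exact (contDiff_succ_iff_deriv.mp this).2.2
  have D1 : Differentiable ℝ h₁ := hreg₁.differentiable (by norm_num)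
  have D1' : Differentiable ℝ (deriv h₁) := c1.differentiable (by norm_num)
  have D1'' : Differentiable ℝ (deriv (deriv h₁)) := c1'.differentiable (by norm_num)
  have D2 : Differentiable ℝ h₂ := hreg₂.differentiable (by norm_num)
  have D2' : Differentiable ℝ (deriv h₂) := c2.differentiable (by norm_num)
  have D2'' : Differentiable ℝ (deriv (deriv h₂)) := c2'.differentiable (by norm_num)
  -- fderiv of xiField
  have hxi : ∀ y u : ℝ × ℝ, fderiv ℝ (xiField h₁ h₂) y u =
      (-(deriv h₁ y.1 * deriv h₂ y.2 * u.1 + h₁ y.1 * deriv (deriv h₂) y.2 * u.2),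
        deriv (deriv h₁) y.1 * h₂ y.2 * u.1 + deriv h₁ y.1 * deriv h₂ y.2 * u.2) := by
    intro y u
    have H := (((sep_hasFDerivAt h₁ (deriv h₂) y (D1 _) (D2' _)).neg).prodMk
      (sep_hasFDerivAt (deriv h₁) h₂ y (D1' _) (D2 _)))
    have : HasFDerivAt (xiField h₁ h₂) _ y := H
    rw [this.fderiv]
    simp [ContinuousLinearMap.smul_apply]
    constructor <;> ring
  -- the acceleration field in separated form
  set G₁ : ℝ → ℝ := fun t => h₁ t * deriv h₁ t with hG₁
  set K₁ : ℝ → ℝ := fun t => (deriv h₂ t) ^ 2 - h₂ t * deriv (deriv h₂) t with hK₁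
  set G₂ : ℝ → ℝ := fun t => (deriv h₁ t) ^ 2 - h₁ t * deriv (deriv h₁) t with hG₂
  set K₂ : ℝ → ℝ := fun t => h₂ t * deriv h₂ t with hK₂
  have hV : (fun y => fderiv ℝ (xiField h₁ h₂) y (xiField h₁ h₂ y)) =
      fun y : ℝ × ℝ => (G₁ y.1 * K₁ y.2, G₂ y.1 * K₂ y.2) := by
    funext y
    rw [hxi y (xiField h₁ h₂ y)]
    simp only [xiField, hG₁, hK₁, hG₂, hK₂]
    rw [Prod.mk.injEq]
    constructor <;> ring
  -- differentiability of factors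
  have dG₁ : Differentiable ℝ G₁ := D1.mul D1'
  have dK₁ : Differentiable ℝ K₁ := (D2'.pow 2).sub (D2.mul D2'')
  have dG₂ : Differentiable ℝ G₂ := (D1'.pow 2).sub (D1.mul D1'')
  have dK₂ : Differentiable ℝ K₂ := D2.mul D2'
  -- derivatives of G₁ and K₂
  have derG₁ : ∀ t, deriv G₁ t = deriv h₁ t * deriv h₁ t + h₁ t * deriv (deriv h₁) t := by
    intro t; rw [hG₁]; rw [deriv_fun_mul (D1 t) (D1' t)]
  have derK₂ : ∀ t, deriv K₂ t = deriv h₂ t * deriv h₂ t + h₂ t * deriv (deriv h₂) t := by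
    intro t; rw [hK₂]; rw [deriv_fun_mul (D2 t) (D2' t)]
  intro x
  constructor
  · -- divergence identity
    rw [hV]
    unfold divR2
    rw [sep2_fderiv_apply G₁ K₁ G₂ K₂ x (1,0) (dG₁ _) (dK₁ _) (dG₂ _) (dK₂ _),
      sep2_fderiv_apply G₁ K₁ G₂ K₂ x (0,1) (dG₁ _) (dK₁ _) (dG₂ _) (dK₂ _)]
    simp only [derG₁ x.1, derK₂ x.2]
    simp only [DHFn, hG₁, hK₁, hG₂, hK₂]
    ring
  · -- Hessian identity
    have hHu : (fun y : ℝ × ℝ => fderiv ℝ (Ham h₁ h₂) y (1, 0)) =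
        fun y : ℝ × ℝ => deriv h₁ y.1 * h₂ y.2 := by
      funext y
      rw [show Ham h₁ h₂ = fun y : ℝ × ℝ => h₁ y.1 * h₂ y.2 from rfl,
        sep_fderiv_apply h₁ h₂ y (1, 0) (D1 _) (D2 _)]
      simp
    have hHv : (fun y : ℝ × ℝ => fderiv ℝ (Ham h₁ h₂) y (0, 1)) =
        fun y : ℝ × ℝ => h₁ y.1 * deriv h₂ y.2 := by
      funext y
      rw [show Ham h₁ h₂ = fun y : ℝ × ℝ => h₁ y.1 * h₂ y.2 from rfl,
        sep_fderiv_apply h₁ h₂ y (0, 1) (D1 _) (D2 _)]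
      simp
    unfold detHess Hess
    rw [hHu, hHv,
      sep_fderiv_apply (deriv h₁) h₂ x (1, 0) (D1' _) (D2 _),
      sep_fderiv_apply (deriv h₁) h₂ x (0, 1) (D1' _) (D2 _),
      sep_fderiv_apply h₁ (deriv h₂) x (1, 0) (D1 _) (D2' _),
      sep_fderiv_apply h₁ (deriv h₂) x (0, 1) (D1 _) (D2' _)]
    simp only [DHFn]
    ring
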